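/- In the alternating irrational case the base dynamics is minimal. Precisely: let γ ∈ ℝ be irrational and let T be the map on (ℝ/ℤ) × {0,1} defined by T(s, 0) = (−s, 1) and T(s, 1) = (−s − γ, 0). Then T is minimal: for every point (s, i), the forward orbit {Tⁿ(s, i) : n ∈ ℕ} is dense in (ℝ/ℤ) × {0,1}. -/

import Mathlib

instance fact_zero_lt_one_real : Fact ((0 : ℝ) < 1) := ⟨one_pos⟩

lemma irr_dense_zsmul (γ : ℝ) (hγ : Irrational γ) :
    DenseRange (fun n : ℤ => n • (γ : AddCircle (1 : ℝ))) := by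
  have hdense : Dense ((AddSubgroup.closure {1, γ} : AddSubgroup ℝ) : Set ℝ) := by
    rcases AddSubgroup.dense_or_cyclic (AddSubgroup.closure {1, γ}) with h | ⟨a, ha⟩
    · exact h
    · exfalso
      have h1 : (1 : ℝ) ∈ AddSubgroup.closure ({1, γ} : Set ℝ) :=
        AddSubgroup.subset_closure (by simp)
      have h2 : γ ∈ AddSubgroup.closure ({1, γ} : Set ℝ) :=
        AddSubgroup.subset_closure (by simp)
      rw [ha, AddSubgroup.mem_closure_singleton] at h1 h2
      obtain ⟨n, hn⟩ := h1
      obtain ⟨m, hm⟩ := h2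
      rw [zsmul_eq_mul] at hn hm
      have hn0 : (n : ℝ) ≠ 0 := by
        intro h; rw [h, zero_mul] at hn; exact one_ne_zero hn.symm
      have : γ = (m : ℝ) / n := by
        field_simp at hn ⊢
        rw [← hm]
        linear_combination (m : ℝ) * hn
      exact hγ ⟨(m : ℚ) / n, by push_cast [this]; ring⟩
  have hcont : Continuous ((↑) : ℝ → AddCircle (1 : ℝ)) := continuous_quotient_mk'
  have hsurj : DenseRange ((↑) : ℝ → AddCircle (1 : ℝ)) :=
    (Quotient.mk''_surjective).denseRange
  have himg := hsurj.dense_image hcont hdense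
  refine Dense.mono ?_ himg
  rintro x ⟨y, hy, rfl⟩
  rw [SetLike.mem_coe, AddSubgroup.mem_closure_pair] at hy
  obtain ⟨m, n, rfl⟩ := hy
  refine ⟨n, ?_⟩
  push_cast
  have h1 : ((1 : ℝ) : AddCircle (1 : ℝ)) = 0 := by
    simp [AddCircle.coe_eq_zero_iff]
  simp [zsmul_eq_mul, h1]

lemma irr_dense_nsmul (γ : ℝ) (hγ : Irrational γ) :
    DenseRange (fun n : ℕ => n • (γ : AddCircle (1 : ℝ))) :=
  denseRange_zsmul_iff_nsmul.mp (irr_dense_zsmul γ hγ)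

lemma dense_translate {c d : AddCircle (1 : ℝ)} (hd : DenseRange (fun n : ℕ => n • d)) :
    Dense (Set.range fun n : ℕ => c + n • d) :=
  DenseRange.comp ((Homeomorph.addLeft c).surjective.denseRange) hd (continuous_add_left c)

lemma dense_prod_fin2 {X : Type*} [TopologicalSpace X] {S : Set (X × Fin 2)} {A B : Set X}
    (hA : Dense A) (hB : Dense B) (h0 : ∀ a ∈ A, (a, (0 : Fin 2)) ∈ S)
    (h1 : ∀ b ∈ B, (b, (1 : Fin 2)) ∈ S) : Dense S := by
  have key : ∀ (C : Set X) (j : Fin 2), Dense C → (∀ c ∈ C, (c, j) ∈ S) →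
      ∀ t : X, (t, j) ∈ closure S := by
    intro C j hC hCS t
    have h1 : (t, j) ∈ closure (C ×ˢ ({j} : Set (Fin 2))) := by
      rw [closure_prod_eq]
      exact ⟨hC t, by simp⟩
    refine closure_mono ?_ h1
    rintro ⟨a, j'⟩ ⟨ha, hj⟩
    simp only [Set.mem_singleton_iff] at hj
    subst hj
    exact hCS a ha
  rintro ⟨t, j⟩
  fin_cases j
  · exact key A 0 hA h0 t
  · exact key B 1 hB h1 t

/-- In the alternating irrational case the base dynamics is minimal: every
forward orbit of the map `T(s,0) = (-s,1)`, `T(s,1) = (-s-γ,0)` on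
`(ℝ/ℤ) × {0,1}` is dense. -/
theorem alternating_irrational_minimal (γ : ℝ) (hγ : Irrational γ)
    (T : AddCircle (1 : ℝ) × Fin 2 → AddCircle (1 : ℝ) × Fin 2)
    (hT0 : ∀ s : AddCircle (1 : ℝ), T (s, 0) = (-s, 1))
    (hT1 : ∀ s : AddCircle (1 : ℝ), T (s, 1) = (-s - (γ : AddCircle (1 : ℝ)), 0)) :
    ∀ x : AddCircle (1 : ℝ) × Fin 2,
      Dense (Set.range fun n : ℕ => T^[n] x) := by
  set c : AddCircle (1 : ℝ) := (γ : AddCircle (1 : ℝ)) with hc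
  have hneg : ((-γ : ℝ) : AddCircle (1 : ℝ)) = -c := rfl
  have hpos : DenseRange (fun n : ℕ => n • c) := irr_dense_nsmul γ hγ
  have hneg' : DenseRange (fun n : ℕ => n • (-c)) := by
    have h := irr_dense_nsmul (-γ) hγ.neg
    rwa [hneg] at h
  have hTT0 : ∀ t : AddCircle (1 : ℝ), T (T (t, 0)) = (t + (-c), 0) := by
    intro t; rw [hT0, hT1]
    congr 1
    rw [neg_neg, sub_eq_add_neg]
  have hTT1 : ∀ t : AddCircle (1 : ℝ), T (T (t, 1)) = (t + c, 1) := by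
    intro t; rw [hT1, hT0]
    congr 1
    abel
  have heven : ∀ (t : AddCircle (1 : ℝ)) (i : Fin 2) (d : AddCircle (1 : ℝ)),
      (∀ u, T (T (u, i)) = (u + d, i)) → ∀ k : ℕ, T^[2 * k] (t, i) = (t + k • d, i) := by
    intro t i d h k
    induction k with
    | zero => simp
    | succ k ih =>
      have h2 : 2 * (k + 1) = 2 + 2 * k := by ring
      rw [h2, Function.iterate_add_apply, ih]
      show T (T _) = _
      rw [h]
      congr 1
      rw [succ_nsmul]
      abel
  rintro ⟨s, i⟩
  fin_cases i
  · -- start on fiber 0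
    refine dense_prod_fin2 (A := Set.range fun k : ℕ => s + k • (-c))
      (B := Set.range fun k : ℕ => -s + k • c)
      (dense_translate hneg') (dense_translate hpos) ?_ ?_
    · rintro a ⟨k, rfl⟩
      exact ⟨2 * k, heven s 0 (-c) hTT0 k⟩
    · rintro b ⟨k, rfl⟩
      refine ⟨2 * k + 1, ?_⟩
      show T^[2 * k + 1] (s, (0 : Fin 2)) = _
      rw [Function.iterate_succ_apply', heven s 0 (-c) hTT0 k, hT0]
      congr 1
      simp only [smul_neg, neg_add, neg_neg]
  · -- start on fiber 1
    refine dense_prod_fin2 (A := Set.range fun k : ℕ => (-s - c) + k • (-c))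
      (B := Set.range fun k : ℕ => s + k • c)
      (dense_translate hneg') (dense_translate hpos) ?_ ?_
    · rintro a ⟨k, rfl⟩
      refine ⟨2 * k + 1, ?_⟩
      show T^[2 * k + 1] (s, (1 : Fin 2)) = _
      rw [Function.iterate_succ_apply', heven s 1 c hTT1 k, hT1]
      congr 1
      simp only [smul_neg, neg_add, sub_eq_add_neg]
      abel
    · rintro b ⟨k, rfl⟩
      exact ⟨2 * k, heven s 1 c hTT1 k⟩
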